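/- Every triangle-free graph Γ on n vertices has at most 2^{n/2} maximal independent sets. -/

import Mathlib

/-- The collection of maximal independent sets of a simple graph. -/
def maxIndepSets {V : Type*} (Γ : SimpleGraph V) : Set (Set V) :=
  {I | (∀ x ∈ I, ∀ y ∈ I, ¬ Γ.Adj x y) ∧
    ∀ J : Set V, (∀ x ∈ J, ∀ y ∈ J, ¬ Γ.Adj x y) → I ⊆ J → I = J}

namespace HT

lemma mem_iff {V : Type*} (Γ : SimpleGraph V) (S : Set V) :
    S ∈ maxIndepSets Γ ↔ (∀ x ∈ S, ∀ y ∈ S, ¬ Γ.Adj x y) ∧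
      ∀ x, x ∉ S → ∃ y ∈ S, Γ.Adj x y := by
  constructor
  · rintro ⟨hind, hmax⟩
    refine ⟨hind, fun x hx => ?_⟩
    by_contra hno
    push_neg at hno
    have hJ : ∀ a ∈ insert x S, ∀ b ∈ insert x S, ¬ Γ.Adj a b := by
      rintro a (rfl | ha) b (rfl | hb)
      · exact Γ.irrefl
      · exact fun h => hno b hb h
      · exact fun h => hno a ha h.symm
      · exact hind a ha b hb
    have := hmax (insert x S) hJ (Set.subset_insert x S)
    exact hx (this ▸ Set.mem_insert x S)
  · rintro ⟨hind, hdom⟩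
    refine ⟨hind, fun J hJ hSJ => ?_⟩
    refine Set.Subset.antisymm hSJ fun y hy => ?_
    by_contra hyS
    obtain ⟨z, hz, hadj⟩ := hdom y hyS
    exact hJ y hy z (hSJ hz) hadj

lemma ncard_biUnion_le {α ι : Type*} (s : Finset ι) (C : ι → Set α) :
    (⋃ i ∈ s, C i).ncard ≤ ∑ i ∈ s, (C i).ncard := by
  classical
  induction s using Finset.induction with
  | empty => simp
  | @insert a s hx ih =>
    rw [Finset.sum_insert hx]
    calc (⋃ i ∈ insert a s, C i).ncard = (C a ∪ ⋃ i ∈ s, C i).ncard := by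
          simp [Set.biUnion_insert]
      _ ≤ (C a).ncard + (⋃ i ∈ s, C i).ncard := Set.ncard_union_le _ _
      _ ≤ _ := Nat.add_le_add_left ih _

lemma class_bound {V : Type*} [Finite V] (Γ : SimpleGraph V) (A : Set V) (x : V)
    (hNA : Γ.neighborSet x ⊆ A) :
    {S | S ∈ maxIndepSets Γ ∧ S ∩ A = {x}}.ncard
      ≤ (maxIndepSets (Γ.induce Aᶜ)).ncard := by
  apply Set.ncard_le_ncard_of_injOn (fun S => (Subtype.val ⁻¹' S : Set ↥Aᶜ))
  · rintro S ⟨hS, hSA⟩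
    rw [mem_iff] at hS ⊢
    obtain ⟨hind, hdom⟩ := hS
    constructor
    · rintro ⟨a, ha⟩ haS ⟨b, hb⟩ hbS hadj
      exact hind a haS b hbS hadj
    · rintro ⟨y, hy⟩ hyS
      obtain ⟨z, hzS, hadj⟩ := hdom y hyS
      have hzx : z ≠ x := by
        rintro rfl
        exact hy (hNA hadj.symm)
      have hzA : z ∉ A := fun hzA => hzx (by
        have : z ∈ S ∩ A := ⟨hzS, hzA⟩
        rwa [hSA] at this)
      exact ⟨⟨z, hzA⟩, hzS, hadj⟩
  · rintro S ⟨hS, hSA⟩ T ⟨hT, hTA⟩ h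
    have key : ∀ U : Set V, U ∩ A = {x} → U = insert x (U ∩ Aᶜ) := by
      intro U hUA
      ext s
      constructor
      · intro hs
        by_cases hsA : s ∈ A
        · have : s ∈ U ∩ A := ⟨hs, hsA⟩
          rw [hUA] at this
          exact Or.inl this
        · exact Or.inr ⟨hs, hsA⟩
      · rintro (rfl | ⟨hs, _⟩)
        · have hx : s ∈ U ∩ A := by rw [hUA]; rfl
          exact hx.1
        · exact hs
    have himg : Subtype.val '' (Subtype.val ⁻¹' S : Set ↥Aᶜ)
        = Subtype.val '' (Subtype.val ⁻¹' T : Set ↥Aᶜ) := by simp only at h; rw [h]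
    rw [Subtype.image_preimage_coe, Subtype.image_preimage_coe] at himg
    rw [key S hSA, key T hTA, Set.inter_comm S, Set.inter_comm T, himg]

lemma s_facts : (0:ℝ) < (Real.sqrt 2)⁻¹ ∧ ((Real.sqrt 2)⁻¹)^2 = 1/2 ∧ (Real.sqrt 2)⁻¹ ≤ 3/4 := by
  have h2 : Real.sqrt 2 ^ 2 = 2 := Real.sq_sqrt (by norm_num)
  have hpos : 0 < Real.sqrt 2 := Real.sqrt_pos.mpr (by norm_num)
  refine ⟨by positivity, ?_, ?_⟩
  · rw [inv_pow, h2]; norm_num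
  · rw [inv_le_comm₀ hpos (by norm_num)]
    nlinarith [hpos.le]

lemma numeric : ∀ d : ℕ,
    (Real.sqrt 2)⁻¹ ^ (d+1) * (1 + ∑ i ∈ Finset.range d, (Real.sqrt 2)⁻¹ ^ i) ≤ 1 := by
  obtain ⟨hpos, hsq, hle⟩ := s_facts
  set s : ℝ := (Real.sqrt 2)⁻¹ with hs
  intro d
  induction d with
  | zero => simpa using by nlinarith
  | succ d ih =>
    rcases Nat.eq_zero_or_pos d with rfl | hd
    · simp [Finset.sum_range_succ]
      nlinarith
    · have expand : s ^ (d + 1 + 1) * (1 + ∑ i ∈ Finset.range (d+1), s ^ i)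
          = s * (s ^ (d+1) * (1 + ∑ i ∈ Finset.range d, s ^ i)) + s^(2*d+2) := by
        rw [Finset.sum_range_succ]
        ring
      rw [expand]
      have h1 : s ^ (2*d+2) ≤ s ^ 4 := by
        apply pow_le_pow_of_le_one hpos.le (by nlinarith) (by omega)
      have h2 : s ^ 4 = 1/4 := by
        have : s^4 = (s^2)^2 := by ring
        rw [this, hsq]; norm_num
      have h3 : s * (s ^ (d+1) * (1 + ∑ i ∈ Finset.range d, s ^ i)) ≤ s * 1 :=
        mul_le_mul_of_nonneg_left ih hpos.le
      nlinarith

lemma pow_bound {r : ℝ} (hr : 1 ≤ r) {c k n : ℕ} (h : c + k ≤ n) :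
    r ^ c ≤ r ^ n * (r⁻¹) ^ k := by
  have hrpos : 0 < r := lt_of_lt_of_le one_pos hr
  rw [inv_pow, ← div_eq_mul_inv, le_div_iff₀ (by positivity), ← pow_add]
  exact pow_le_pow_right₀ hr h

universe u

lemma main : ∀ (n : ℕ) (V : Type u) (_ : Finite V), Nat.card V = n →
    ∀ Γ : SimpleGraph V, Γ.CliqueFree 3 →
    ((maxIndepSets Γ).ncard : ℝ) ≤ (Real.sqrt 2) ^ n := by
  intro n
  induction n using Nat.strong_induction_on with
  | _ n ih =>
  intro V hfin hcard Γ hΓ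
  haveI := hfin
  have hr1 : (1:ℝ) ≤ Real.sqrt 2 := by
    nlinarith [Real.sq_sqrt (show (0:ℝ) ≤ 2 by norm_num), Real.sqrt_nonneg 2]
  cases isEmpty_or_nonempty V with
  | inl hempty =>
    have hn : n = 0 := by rw [← hcard]; exact Nat.card_of_isEmpty
    have hset : maxIndepSets Γ = {∅} := by
      apply Set.eq_singleton_iff_unique_mem.mpr
      constructor
      · exact ⟨by simp, fun J _ _ => (Set.eq_empty_of_isEmpty J).symm⟩
      · intro I _
        exact Set.eq_empty_of_isEmpty I
    rw [hset, Set.ncard_singleton, hn, pow_zero]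
    norm_num
  | inr hne =>
    classical
    have hfty : Fintype V := Fintype.ofFinite V
    obtain ⟨v, -, hv⟩ := Finset.exists_min_image Finset.univ
      (fun w => (Γ.neighborSet w).ncard) ⟨Classical.arbitrary V, Finset.mem_univ _⟩
    set d := (Γ.neighborSet v).ncard with hd
    have hmin : ∀ w, d ≤ (Γ.neighborSet w).ncard := fun w => hv w (Finset.mem_univ w)
    have hftyNv : Fintype ↥(Γ.neighborSet v) := Fintype.ofFinite _
    have hcardNv' : Fintype.card ↥(Γ.neighborSet v) = d := by
      rw [← Nat.card_eq_fintype_card, Nat.card_coe_set_eq]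
    let e : Fin d ≃ ↥(Γ.neighborSet v) := (Fintype.equivFinOfCardEq hcardNv').symm
    let u : Fin d → V := fun i => ((e i : ↥(Γ.neighborSet v)) : V)
    have hu_adj : ∀ i, Γ.Adj v (u i) := fun i => (e i).2
    have hu_inj : Function.Injective u := fun i j hij => e.injective (Subtype.ext hij)
    have hnadj : ∀ i j, ¬ Γ.Adj (u i) (u j) := by
      intro i j hadj
      exact hΓ {v, u i, u j} (SimpleGraph.is3Clique_triple_iff.mpr ⟨hu_adj i, hu_adj j, hadj⟩)
    set Av : Set V := insert v (Γ.neighborSet v) with hAv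
    set Ai : Fin d → Set V := fun i =>
      insert (u i) (Γ.neighborSet (u i)) ∪ (u '' {j | j < i}) with hAi
    set Cv : Set (Set V) := {S | S ∈ maxIndepSets Γ ∧ S ∩ Av = {v}} with hCv
    set Ci : Fin d → Set (Set V) :=
      fun i => {S | S ∈ maxIndepSets Γ ∧ S ∩ Ai i = {u i}} with hCi
    -- cover
    have hcover : maxIndepSets Γ ⊆ Cv ∪ ⋃ i ∈ Finset.univ, Ci i := by
      intro S hS
      obtain ⟨hind, hdom⟩ := (mem_iff Γ S).mp hS
      by_cases hvS : v ∈ S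
      · left
        refine ⟨hS, ?_⟩
        apply Set.Subset.antisymm
        · rintro y ⟨hyS, hyA⟩
          rcases hyA with rfl | hyN
          · rfl
          · exact absurd hyN (hind v hvS y hyS)
        · rintro y rfl
          exact ⟨hvS, Set.mem_insert _ _⟩
      · right
        obtain ⟨z, hzS, hzadj⟩ := hdom v hvS
        have hz : z ∈ Γ.neighborSet v := hzadj
        set T : Finset (Fin d) := Finset.univ.filter (fun i => u i ∈ S) with hT
        have hTne : T.Nonempty := by
          refine ⟨e.symm ⟨z, hz⟩, Finset.mem_filter.mpr ⟨Finset.mem_univ _, ?_⟩⟩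
          show ((e (e.symm ⟨z, hz⟩) : ↥(Γ.neighborSet v)) : V) ∈ S
          rw [Equiv.apply_symm_apply]
          exact hzS
        set i := T.min' hTne with hi
        have hiS : u i ∈ S := (Finset.mem_filter.mp (T.min'_mem hTne)).2
        refine Set.mem_biUnion (Finset.mem_univ i) ⟨hS, ?_⟩
        apply Set.Subset.antisymm
        · rintro y ⟨hyS, hyA⟩
          rcases hyA with (rfl | hyN) | ⟨j, hj, rfl⟩
          · rfl
          · exact absurd hyN (hind (u i) hiS y hyS)
          · have hjT : j ∈ T := Finset.mem_filter.mpr ⟨Finset.mem_univ _, hyS⟩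
            exact absurd (T.min'_le j hjT) (not_le.mpr hj)
        · rintro y rfl
          exact ⟨hiS, Or.inl (Set.mem_insert _ _)⟩
    -- cardinalities of the A sets
    have hAv_card : Av.ncard = d + 1 := by
      rw [hAv, Set.ncard_insert_of_notMem (by simp) (Set.toFinite _)]
    have hAi_card : ∀ i : Fin d, d + 1 + (i : ℕ) ≤ (Ai i).ncard := by
      intro i
      have hdisj : Disjoint (insert (u i) (Γ.neighborSet (u i))) (u '' {j | j < i}) := by
        rw [Set.disjoint_right]
        intro y hyt hys
        obtain ⟨j, hj, rfl⟩ := hyt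
        rcases hys with heq | hyN
        · exact absurd (hu_inj heq) (Fin.ne_of_lt hj)
        · exact hnadj i j hyN
      have hrw : (Ai i).ncard = (insert (u i) (Γ.neighborSet (u i))).ncard
          + (u '' {j | j < i}).ncard :=
        Set.ncard_union_eq hdisj (Set.toFinite _) (Set.toFinite _)
      have h1 : d + 1 ≤ (insert (u i) (Γ.neighborSet (u i))).ncard := by
        rw [Set.ncard_insert_of_notMem (by simp) (Set.toFinite _)]
        exact Nat.add_le_add_right (hmin (u i)) 1
      have h2 : (u '' {j | j < i}).ncard = (i : ℕ) := by
        rw [Set.ncard_image_of_injective _ hu_inj,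
          show {j : Fin d | j < i} = ↑(Finset.Iio i) by ext; simp,
          Set.ncard_coe_finset, Fin.card_Iio]
      omega
    -- bound for a single class, via the induction hypothesis
    have hIH : ∀ (A : Set V) (x : V), x ∈ A → Γ.neighborSet x ⊆ A →
        ∀ k : ℕ, k ≤ A.ncard →
        ({S | S ∈ maxIndepSets Γ ∧ S ∩ A = {x}}.ncard : ℝ)
          ≤ Real.sqrt 2 ^ n * ((Real.sqrt 2)⁻¹) ^ k := by
      intro A x hxA hNA k hk
      have hcompl : A.ncard + (Aᶜ : Set V).ncard = n := by
        rw [Set.ncard_add_ncard_compl A (Set.toFinite _) (Set.toFinite _), hcard]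
      have hApos : 0 < A.ncard := (Set.ncard_pos (Set.toFinite _)).mpr ⟨x, hxA⟩
      have hAc : Nat.card ↥(Aᶜ : Set V) = (Aᶜ : Set V).ncard := Nat.card_coe_set_eq _
      have hlt : Nat.card ↥(Aᶜ : Set V) < n := by omega
      have hcf : (Γ.induce Aᶜ).CliqueFree 3 :=
        SimpleGraph.CliqueFree.comap ⟨(SimpleGraph.Embedding.induce Aᶜ).toCopy⟩ hΓ
      have hrec := ih _ hlt ↥(Aᶜ : Set V) inferInstance rfl (Γ.induce Aᶜ) hcf
      calc ({S | S ∈ maxIndepSets Γ ∧ S ∩ A = {x}}.ncard : ℝ)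
          ≤ ((maxIndepSets (Γ.induce Aᶜ)).ncard : ℝ) :=
            Nat.cast_le.mpr (class_bound Γ A x hNA)
        _ ≤ Real.sqrt 2 ^ (Nat.card ↥(Aᶜ : Set V)) := hrec
        _ ≤ Real.sqrt 2 ^ n * ((Real.sqrt 2)⁻¹) ^ k := pow_bound hr1 (by omega)
    have hcv : ((Cv.ncard : ℕ) : ℝ) ≤ Real.sqrt 2 ^ n * ((Real.sqrt 2)⁻¹)^(d+1) :=
      hIH Av v (Set.mem_insert _ _) (Set.subset_insert _ _) (d+1) (le_of_eq hAv_card.symm)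
    have hci : ∀ i : Fin d,
        (((Ci i).ncard : ℕ) : ℝ) ≤ Real.sqrt 2 ^ n * ((Real.sqrt 2)⁻¹)^(d+1+(i:ℕ)) := by
      intro i
      exact hIH (Ai i) (u i) (Or.inl (Set.mem_insert _ _))
        (fun y hy => Or.inl (Set.mem_insert_of_mem _ hy)) _ (hAi_card i)
    have hsum : (maxIndepSets Γ).ncard ≤ Cv.ncard + ∑ i : Fin d, (Ci i).ncard := by
      calc (maxIndepSets Γ).ncard ≤ (Cv ∪ ⋃ i ∈ Finset.univ, Ci i).ncard :=
            Set.ncard_le_ncard hcover (Set.toFinite _)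
        _ ≤ Cv.ncard + (⋃ i ∈ Finset.univ, Ci i).ncard := Set.ncard_union_le _ _
        _ ≤ _ := Nat.add_le_add_left (ncard_biUnion_le _ _) _
    calc ((maxIndepSets Γ).ncard : ℝ)
        ≤ (Cv.ncard : ℝ) + ∑ i : Fin d, ((Ci i).ncard : ℝ) := by
          have := (Nat.cast_le (α := ℝ)).mpr hsum
          push_cast at this ⊢
          exact this
      _ ≤ Real.sqrt 2 ^ n * ((Real.sqrt 2)⁻¹)^(d+1)
          + ∑ i : Fin d, Real.sqrt 2 ^ n * ((Real.sqrt 2)⁻¹)^(d+1+(i:ℕ)) :=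
          add_le_add hcv (Finset.sum_le_sum fun i _ => hci i)
      _ = Real.sqrt 2 ^ n * (((Real.sqrt 2)⁻¹)^(d+1)
          * (1 + ∑ i ∈ Finset.range d, ((Real.sqrt 2)⁻¹)^i)) := by
          rw [Fin.sum_univ_eq_sum_range (fun k => Real.sqrt 2 ^ n * ((Real.sqrt 2)⁻¹)^(d+1+k)) d]
          have hpa : ∀ k, ((Real.sqrt 2)⁻¹:ℝ)^(d+1+k)
              = ((Real.sqrt 2)⁻¹)^(d+1) * ((Real.sqrt 2)⁻¹)^k := fun k => pow_add _ _ _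
          simp only [hpa]
          rw [← Finset.mul_sum, ← Finset.mul_sum]
          ring
      _ ≤ Real.sqrt 2 ^ n * 1 :=
          mul_le_mul_of_nonneg_left (numeric d) (by positivity)
      _ = Real.sqrt 2 ^ n := mul_one _

end HT

/-- Hujter–Tuza: every triangle-free graph on `n` vertices has at
most `2^{n/2}` maximal independent sets. -/
theorem stmt7 (V : Type*) [Finite V] (Γ : SimpleGraph V) (hΓ : Γ.CliqueFree 3) :
    ((maxIndepSets Γ).ncard : ℝ) ≤ (2 : ℝ) ^ ((Nat.card V : ℝ) / 2) := by
  have h := HT.main (Nat.card V) V inferInstance rfl Γ hΓ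
  have heq : (2 : ℝ) ^ ((Nat.card V : ℝ) / 2) = (Real.sqrt 2) ^ (Nat.card V) := by
    rw [show ((Nat.card V : ℝ) / 2) = (1/2 : ℝ) * (Nat.card V) by ring,
      Real.rpow_mul (by norm_num), Real.rpow_natCast, Real.sqrt_eq_rpow]
  rw [heq]
  exact h
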